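/- Let X be a normed vector space, T > 0, n ∈ ℕ, τ = T/n, t_i = iτ, and u_0, u_1, …, u_n ∈ X with δu_i = (u_i − u_{i-1})/τ. Define the piecewise-linear Rothe function U_n : [0,T] → X by U_n(0) = u_0 and U_n(t) = u_{i-1} + (t − t_{i-1})δu_i for t ∈ (t_{i-1}, t_i], and the piecewise-constant Rothe function Ū_n : [−τ, T] → X by Ū_n(t) = u_0 for t ∈ [−τ, 0] and Ū_n(t) = u_i for t ∈ (t_{i-1}, t_i]. Then ∫₀^T ( ‖Ū_n(t) − U_n(t)‖² + ‖Ū_n(t − τ) − U_n(t)‖² ) dt ≤ 2 τ² ∑_{i=1}^{n} ‖δu_i‖² τ. -/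

import Mathlib

open MeasureTheory Set

/-- For the piecewise-linear Rothe function `U_n` and the piecewise-constant
Rothe function `Ū_n` built from `u_0, …, u_n` in a normed vector space `X` with step `τ = T/n`,
one has `∫₀^T (‖Ū_n(t) − U_n(t)‖² + ‖Ū_n(t−τ) − U_n(t)‖²) dt ≤ 2τ² ∑_{i=1}^{n} ‖δu_i‖² τ`,
where `δu_i = (u_i − u_{i-1})/τ`. -/
theorem statement_7 {X : Type*} [NormedAddCommGroup X] [NormedSpace ℝ X]
    (T : ℝ) (hT : 0 < T) (n : ℕ) (hn : 1 ≤ n)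
    (τ : ℝ) (hτ : τ = T / n)
    (u : ℕ → X) (U Ubar : ℝ → X)
    (hU0 : U 0 = u 0)
    (hU : ∀ i : ℕ, 1 ≤ i → i ≤ n → ∀ t ∈ Ioc (((i : ℝ) - 1) * τ) ((i : ℝ) * τ),
      U t = u (i - 1) + (t - ((i : ℝ) - 1) * τ) • (τ⁻¹ • (u i - u (i - 1))))
    (hUbar0 : ∀ t ∈ Icc (-τ) (0 : ℝ), Ubar t = u 0)
    (hUbar : ∀ i : ℕ, 1 ≤ i → i ≤ n → ∀ t ∈ Ioc (((i : ℝ) - 1) * τ) ((i : ℝ) * τ),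
      Ubar t = u i) :
    ∫ t in Ioc (0 : ℝ) T, (‖Ubar t - U t‖ ^ 2 + ‖Ubar (t - τ) - U t‖ ^ 2)
      ≤ 2 * τ ^ 2 * ∑ i ∈ Finset.Icc 1 n, ‖τ⁻¹ • (u i - u (i - 1))‖ ^ 2 * τ := by
  have hn' : (0:ℝ) < n := by exact_mod_cast Nat.pos_of_ne_zero (by omega)
  have hτ0 : 0 < τ := by rw [hτ]; positivity
  have hTn : (n : ℝ) * τ = T := by rw [hτ]; field_simp
  set f : ℝ → ℝ := fun t => ‖Ubar t - U t‖ ^ 2 + ‖Ubar (t - τ) - U t‖ ^ 2 with hf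
  set d : ℕ → X := fun k => τ⁻¹ • (u (k+1) - u k) with hd
  -- key pointwise identity on each subinterval
  have key : ∀ k : ℕ, k < n → ∀ t ∈ Ioc ((k:ℝ)*τ) ((k:ℝ)*τ + τ),
      f t = (((k:ℝ)*τ + τ - t)^2 + (t - (k:ℝ)*τ)^2) * ‖d k‖^2 := by
    intro k hk t ht
    have hmem : t ∈ Ioc ((((k+1:ℕ):ℝ) - 1) * τ) (((k+1:ℕ):ℝ) * τ) := by
      push_cast
      constructor
      · have := ht.1; nlinarith [ht.1]
      · have := ht.2; nlinarith [ht.2]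
    have hUt : U t = u k + (t - (k:ℝ)*τ) • d k := by
      have := hU (k+1) (by omega) (by omega) t hmem
      rw [this]
      push_cast
      norm_num [hd]
    have hUbart : Ubar t = u (k+1) := hUbar (k+1) (by omega) (by omega) t hmem
    have hUbartτ : Ubar (t - τ) = u k := by
      rcases Nat.eq_zero_or_pos k with hk0 | hk0
      · subst hk0
        apply hUbar0
        simp only [Nat.cast_zero, zero_mul, zero_add] at ht
        exact ⟨by linarith [ht.1], by linarith [ht.2]⟩
      · have := hUbar k hk0 (by omega) (t - τ)
          ⟨by linarith [ht.1, hτ0], by linarith [ht.2]⟩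
        simpa using this
    have hτd : τ • d k = u (k+1) - u k := by
      rw [hd]; simp [smul_smul, mul_inv_cancel₀ hτ0.ne']
    have e1 : Ubar t - U t = ((k:ℝ)*τ + τ - t) • d k := by
      rw [hUbart, hUt,
        show u (k+1) - (u k + (t - (k:ℝ)*τ) • d k)
          = (u (k+1) - u k) - (t - (k:ℝ)*τ) • d k by abel,
        ← hτd, ← sub_smul]
      congr 1; ring
    have e2 : Ubar (t - τ) - U t = ((k:ℝ)*τ - t) • d k := by
      rw [hUbartτ, hUt,
        show (k:ℝ)*τ - t = -(t - (k:ℝ)*τ) by ring, neg_smul]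
      abel
    show ‖Ubar t - U t‖ ^ 2 + ‖Ubar (t - τ) - U t‖ ^ 2 = _
    simp only [e1, e2, norm_smul, Real.norm_eq_abs, mul_pow, sq_abs]
    ring
  set g : ℕ → ℝ → ℝ := fun k t => (((k:ℝ)*τ + τ - t)^2 + (t - (k:ℝ)*τ)^2) * ‖d k‖^2 with hg
  have hgint : ∀ k : ℕ, IntegrableOn (g k) (Ioc ((k:ℝ)*τ) ((k:ℝ)*τ + τ)) := by
    intro k
    apply Continuous.integrableOn_Ioc
    fun_prop
  have hfint : ∀ k : ℕ, k < n → IntegrableOn f (Ioc ((k:ℝ)*τ) ((k:ℝ)*τ + τ)) := by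
    intro k hk
    exact (hgint k).congr_fun (fun t ht => (key k hk t ht).symm) measurableSet_Ioc
  have hle : ∀ k : ℕ, (k:ℝ)*τ ≤ (k:ℝ)*τ + τ := fun k => by linarith [hτ0]
  -- sum over adjacent intervals
  have hII : ∀ k : ℕ, k < n → IntervalIntegrable f volume ((k:ℝ)*τ) ((((k+1:ℕ)):ℝ) * τ) := by
    intro k hk
    have h1 : ((k+1:ℕ):ℝ) * τ = (k:ℝ)*τ + τ := by push_cast; ring
    rw [h1, intervalIntegrable_iff_integrableOn_Ioc_of_le (hle k)]
    exact hfint k hk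
  have hsum := intervalIntegral.sum_integral_adjacent_intervals
    (a := fun k : ℕ => (k:ℝ) * τ) (μ := volume) (f := f) (n := n) hII
  have hIocT : ∫ t in Ioc (0:ℝ) T, f t
      = ∑ k ∈ Finset.range n, ∫ t in ((k:ℝ)*τ)..((((k+1:ℕ)):ℝ) * τ), f t := by
    rw [hsum, intervalIntegral.integral_of_le (by simpa [hTn] using hT.le)]
    norm_num [hTn]
  calc ∫ t in Ioc (0:ℝ) T, f t
      = ∑ k ∈ Finset.range n, ∫ t in ((k:ℝ)*τ)..((((k+1:ℕ)):ℝ) * τ), f t := hIocT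
    _ ≤ ∑ k ∈ Finset.range n, 2 * τ^2 * (‖d k‖^2 * τ) := by
        apply Finset.sum_le_sum
        intro k hk
        have hk' := Finset.mem_range.mp hk
        have h1 : ((k+1:ℕ):ℝ) * τ = (k:ℝ)*τ + τ := by push_cast; ring
        rw [h1, intervalIntegral.integral_of_le (hle k),
          setIntegral_congr_fun measurableSet_Ioc (key k hk')]
        have h2 : ∫ t in Ioc ((k:ℝ)*τ) ((k:ℝ)*τ + τ),
            (((k:ℝ)*τ + τ - t)^2 + (t - (k:ℝ)*τ)^2) * ‖d k‖^2
            ≤ ∫ _t in Ioc ((k:ℝ)*τ) ((k:ℝ)*τ + τ), (2 * τ^2 * ‖d k‖^2 : ℝ) := by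
          apply setIntegral_mono_on (hgint k)
            (integrableOn_const (by rw [Real.volume_Ioc]; exact ENNReal.ofReal_ne_top))
            measurableSet_Ioc
          intro t ht
          have h3 : ((k:ℝ)*τ + τ - t)^2 ≤ τ^2 := by nlinarith [ht.1, ht.2]
          have h4 : (t - (k:ℝ)*τ)^2 ≤ τ^2 := by nlinarith [ht.1, ht.2]
          have h5 : (0:ℝ) ≤ ‖d k‖^2 := by positivity
          show (((k:ℝ)*τ + τ - t)^2 + (t - (k:ℝ)*τ)^2) * ‖d k‖^2 ≤ 2 * τ^2 * ‖d k‖^2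
          nlinarith [h3, h4, h5]
        refine h2.trans ?_
        rw [setIntegral_const, measureReal_def, Real.volume_Ioc, smul_eq_mul,
          ENNReal.toReal_ofReal (by linarith [hτ0.le] : (0:ℝ) ≤ (k:ℝ)*τ + τ - (k:ℝ)*τ)]
        ring_nf
        nlinarith [hτ0.le]
    _ = 2 * τ ^ 2 * ∑ i ∈ Finset.Icc 1 n, ‖τ⁻¹ • (u i - u (i - 1))‖ ^ 2 * τ := by
        rw [Finset.mul_sum, show Finset.Icc 1 n = Finset.Ico 1 (n+1) by
          rw [Finset.Ico_add_one_right_eq_Icc], Finset.sum_Ico_eq_sum_range]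
        simp [hd, add_comm 1]
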